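/- (Lemma 2) Assume the spectra of A and S are disjoint. Let M_des ∈ ℝ^{p×ν}, M_c ∈ ℝ^{m×ν}, and G_a ∈ ℝ^{ν×p}, suppose M_c satisfies T_S(M_c) = M_des − M_open, and define A_aug := [[A, B·M_c],[G_a·C, S − G_a·(M_des − D·M_c)]] ∈ ℝ^{(n+ν)×(n+ν)} and C_aug := [C, −(M_des − D·M_c)] ∈ ℝ^{p×(n+ν)}. Then (C_aug, A_aug) is PBH-detectable if and only if both (C, A) and (M_open, S) are PBH-detectable. -/

import Mathlib

open Matrix

/-- A pair `(C, A)` is PBH-detectable if for every `λ ∈ ℂ` with `Re λ ≥ 0` the stacked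
complex matrix `[A - λI; C]` has full column rank. -/
def PBHDetectable {c a : Type*} [Fintype c] [Fintype a] [DecidableEq a]
    (C : Matrix c a ℝ) (A : Matrix a a ℝ) : Prop :=
  ∀ l : ℂ, 0 ≤ l.re →
    (Matrix.fromRows (A.map Complex.ofReal - l • (1 : Matrix a a ℂ))
      (C.map Complex.ofReal)).rank = Fintype.card a

section Aux

variable {a b c r : Type*} [Fintype a] [Fintype b] [Fintype c] [Fintype r]

lemma mapC_mul (X : Matrix a b ℝ) (Y : Matrix b c ℝ) :
    (X * Y).map Complex.ofReal = X.map Complex.ofReal * Y.map Complex.ofReal := by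
  ext i j
  simp [Matrix.mul_apply, Matrix.map_apply]

lemma mapC_add (X Y : Matrix a b ℝ) :
    (X + Y).map Complex.ofReal = X.map Complex.ofReal + Y.map Complex.ofReal := by
  ext i j; simp

lemma mapC_sub (X Y : Matrix a b ℝ) :
    (X - Y).map Complex.ofReal = X.map Complex.ofReal - Y.map Complex.ofReal := by
  ext i j; simp

lemma mapC_neg (X : Matrix a b ℝ) :
    (-X).map Complex.ofReal = -(X.map Complex.ofReal) := by
  ext i j; simp

lemma rank_eq_card_iff [DecidableEq b] (M : Matrix r b ℂ) :
    M.rank = Fintype.card b ↔ ∀ v : b → ℂ, M *ᵥ v = 0 → v = 0 := by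
  have hrn := LinearMap.finrank_range_add_finrank_ker M.mulVecLin
  rw [Module.finrank_pi ℂ] at hrn
  have : M.rank = Fintype.card b ↔
      Module.finrank ℂ (LinearMap.ker M.mulVecLin) = 0 := by
    rw [Matrix.rank]; omega
  rw [this, Submodule.finrank_eq_zero, LinearMap.ker_eq_bot']
  constructor
  · intro h v hv; exact h v (by simpa [Matrix.mulVecLin_apply] using hv)
  · intro h v hv; exact h v (by simpa [Matrix.mulVecLin_apply] using hv)

lemma sum_elim_eq_zero_iff {f : a → ℂ} {g : b → ℂ} :
    Sum.elim f g = 0 ↔ f = 0 ∧ g = 0 := by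
  constructor
  · intro h
    constructor
    · funext i; exact congrFun h (Sum.inl i)
    · funext i; exact congrFun h (Sum.inr i)
  · rintro ⟨h1, h2⟩; subst h1; subst h2; funext i; cases i <;> rfl

lemma pbh_iff_ker [DecidableEq b] (C : Matrix c b ℝ) (A : Matrix b b ℝ) :
    PBHDetectable C A ↔ ∀ l : ℂ, 0 ≤ l.re → ∀ v : b → ℂ,
      A.map Complex.ofReal *ᵥ v = l • v → C.map Complex.ofReal *ᵥ v = 0 → v = 0 := by
  unfold PBHDetectable
  refine forall_congr' fun l => forall_congr' fun hl => ?_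
  rw [rank_eq_card_iff]
  have key : ∀ v : b → ℂ,
      (Matrix.fromRows (A.map Complex.ofReal - l • (1 : Matrix b b ℂ))
        (C.map Complex.ofReal)) *ᵥ v = 0 ↔
      (A.map Complex.ofReal *ᵥ v = l • v ∧ C.map Complex.ofReal *ᵥ v = 0) := by
    intro v
    rw [Matrix.fromRows_mulVec, sum_elim_eq_zero_iff, Matrix.sub_mulVec,
      Matrix.smul_mulVec, Matrix.one_mulVec, sub_eq_zero]
  constructor
  · intro h v h1 h2; exact h v ((key v).mpr ⟨h1, h2⟩)
  · intro h v hv; obtain ⟨h1, h2⟩ := (key v).mp hv; exact h v h1 h2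

lemma mem_spectrum_of_eigen {M : Matrix b b ℂ} [DecidableEq b] {l : ℂ} {v : b → ℂ}
    (hv : v ≠ 0) (h : M *ᵥ v = l • v) : l ∈ spectrum ℂ M := by
  rw [spectrum.mem_iff]
  intro hu
  rw [Algebra.algebraMap_eq_smul_one] at hu
  have hinj := Matrix.mulVec_injective_iff_isUnit.mpr hu
  apply hv
  have : (l • (1 : Matrix b b ℂ) - M) *ᵥ v = (l • (1 : Matrix b b ℂ) - M) *ᵥ 0 := by
    rw [Matrix.sub_mulVec, Matrix.smul_mulVec, Matrix.one_mulVec, h,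
      sub_self, Matrix.mulVec_zero]
  exact hinj this

lemma mapC_fromCols (X : Matrix c a ℝ) (Y : Matrix c b ℝ) :
    (Matrix.fromCols X Y).map Complex.ofReal =
      Matrix.fromCols (X.map Complex.ofReal) (Y.map Complex.ofReal) := by
  ext i j; cases j <;> rfl

end Aux

/-- **Lemma 2.** Assume the spectra of `A` and `S` are disjoint and
`M_c` satisfies `T_S(M_c) = M_des - M_open` (witnessed by the Sylvester solutions `Π` and
`Π̂`). Then the augmented pair `(C_aug, A_aug)` is PBH-detectable if and only if both
`(C, A)` and `(M_open, S)` are PBH-detectable. -/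
theorem augmented_detectable_iff (n m p q ν : ℕ)
    (A : Matrix (Fin n) (Fin n) ℝ) (B : Matrix (Fin n) (Fin m) ℝ)
    (C : Matrix (Fin p) (Fin n) ℝ) (D : Matrix (Fin p) (Fin m) ℝ)
    (P : Matrix (Fin n) (Fin q) ℝ) (Q : Matrix (Fin p) (Fin q) ℝ)
    (S : Matrix (Fin ν) (Fin ν) ℝ) (L : Matrix (Fin q) (Fin ν) ℝ)
    (hdisj : ∀ μ : ℂ, ¬(μ ∈ spectrum ℂ (A.map Complex.ofReal) ∧
      μ ∈ spectrum ℂ (S.map Complex.ofReal)))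
    (Mdes : Matrix (Fin p) (Fin ν) ℝ) (Mc : Matrix (Fin m) (Fin ν) ℝ)
    (Ga : Matrix (Fin ν) (Fin p) ℝ)
    (Pi : Matrix (Fin n) (Fin ν) ℝ) (hPi : Pi * S = A * Pi + P * L)
    (Pihat : Matrix (Fin n) (Fin ν) ℝ) (hPihat : Pihat * S = A * Pihat + B * Mc)
    -- `T_S(M_c) = M_des - M_open`:
    (hMc : C * Pihat + D * Mc = Mdes - (C * Pi + Q * L)) :
    PBHDetectable
      (Matrix.fromCols C (-(Mdes - D * Mc)))
      (Matrix.fromBlocks A (B * Mc) (Ga * C) (S - Ga * (Mdes - D * Mc))) ↔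
    (PBHDetectable C A ∧ PBHDetectable (C * Pi + Q * L) S) := by
  -- complex versions of all matrices
  set A' := A.map Complex.ofReal with hA'
  set B' := B.map Complex.ofReal with hB'
  set C' := C.map Complex.ofReal with hC'
  set D' := D.map Complex.ofReal with hD'
  set S' := S.map Complex.ofReal with hS'
  set Mc' := Mc.map Complex.ofReal with hMc'
  set Mdes' := Mdes.map Complex.ofReal with hMdes'
  set Ga' := Ga.map Complex.ofReal with hGa'
  set Pihat' := Pihat.map Complex.ofReal with hPihat'
  set Mop' := (C * Pi + Q * L).map Complex.ofReal with hMop'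
  have hSyl : Pihat' * S' = A' * Pihat' + B' * Mc' := by
    have := congrArg (fun X => X.map Complex.ofReal) hPihat
    simpa [mapC_mul, mapC_add] using this
  have hMopEq : Mop' = C' * (Pi.map Complex.ofReal) + Q.map Complex.ofReal * L.map Complex.ofReal := by
    rw [hMop', mapC_add, mapC_mul, mapC_mul]
  have hRel : C' * Pihat' + D' * Mc' = Mdes' - Mop' := by
    rw [hMopEq]
    have := congrArg (fun X => X.map Complex.ofReal) hMc
    simpa [mapC_mul, mapC_add, mapC_sub] using this
  have hE : (Mdes - D * Mc).map Complex.ofReal = Mdes' - D' * Mc' := by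
    simp [mapC_sub, mapC_mul]
    rfl
  -- the map of the augmented matrices
  rw [pbh_iff_ker, pbh_iff_ker, pbh_iff_ker]
  have hAug : (Matrix.fromBlocks A (B * Mc) (Ga * C)
        (S - Ga * (Mdes - D * Mc))).map Complex.ofReal =
      Matrix.fromBlocks A' (B' * Mc') (Ga' * C') (S' - Ga' * (Mdes' - D' * Mc')) := by
    rw [Matrix.fromBlocks_map, mapC_mul B Mc, mapC_mul Ga C, mapC_sub, mapC_mul Ga, hE]
  have hCaug : (Matrix.fromCols C (-(Mdes - D * Mc))).map Complex.ofReal =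
      Matrix.fromCols C' (-(Mdes' - D' * Mc')) := by
    rw [mapC_fromCols, mapC_neg, hE]
  rw [hAug, hCaug]
  constructor
  · intro h
    constructor
    · intro l hl v hAv hCv
      have hz := h l hl (Sum.elim v 0) ?_ ?_
      · funext i; exact congrFun hz (Sum.inl i)
      · rw [Matrix.fromBlocks_mulVec]
        funext i
        cases i with
        | inl i =>
          simp only [Sum.elim_comp_inl, Sum.elim_comp_inr, Matrix.mulVec_zero,
            add_zero, Sum.elim_inl, hA', hAv]
          simp
        | inr i =>
          simp only [Sum.elim_comp_inl, Sum.elim_comp_inr, Matrix.mulVec_zero,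
            add_zero, Sum.elim_inr, ← Matrix.mulVec_mulVec, hC', hCv]
          simp
      · rw [show Sum.elim v (0 : Fin ν → ℂ) = Sum.elim v 0 from rfl,
          Matrix.fromCols_mulVec_sumElim, hCv, Matrix.mulVec_zero, add_zero]
    · intro l hl w hSw hMw
      have hz := h l hl (Sum.elim (Pihat' *ᵥ w) w) ?_ ?_
      · funext i; exact congrFun hz (Sum.inr i)
      · rw [Matrix.fromBlocks_mulVec]
        have hCP : C' * Pihat' = Mdes' - D' * Mc' - Mop' := by
          rw [eq_sub_of_add_eq hRel]; abel
        funext i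
        cases i with
        | inl i =>
          simp only [Sum.elim_comp_inl, Sum.elim_comp_inr, Sum.elim_inl]
          have : A' *ᵥ (Pihat' *ᵥ w) + (B' * Mc') *ᵥ w
              = (A' * Pihat' + B' * Mc') *ᵥ w := by
            rw [Matrix.add_mulVec, Matrix.mulVec_mulVec]
          rw [this, ← hSyl, ← Matrix.mulVec_mulVec, hSw, Matrix.mulVec_smul]
          simp
        | inr i =>
          simp only [Sum.elim_comp_inl, Sum.elim_comp_inr, Sum.elim_inr]
          have h2 : C' *ᵥ (Pihat' *ᵥ w) = (Mdes' - D' * Mc') *ᵥ w := by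
            rw [Matrix.mulVec_mulVec, hCP, Matrix.sub_mulVec, hMw, sub_zero]
          have key : (Ga' * C') *ᵥ (Pihat' *ᵥ w)
              + (S' - Ga' * (Mdes' - D' * Mc')) *ᵥ w = l • w := by
            rw [← Matrix.mulVec_mulVec (Pihat' *ᵥ w) Ga' C', h2,
              Matrix.sub_mulVec S', ← Matrix.mulVec_mulVec w Ga' (Mdes' - D' * Mc'),
              hSw]
            abel
          exact congrFun key i
      · have hCP : C' * Pihat' = Mdes' - D' * Mc' - Mop' := by
          rw [eq_sub_of_add_eq hRel]; abel
        rw [Matrix.fromCols_mulVec_sumElim, Matrix.neg_mulVec,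
          Matrix.mulVec_mulVec, hCP]
        simp only [Matrix.sub_mulVec]
        rw [hMw]
        abel
  · rintro ⟨hCA, hMS⟩ l hl z hAz hCz
    set x : Fin n → ℂ := z ∘ Sum.inl with hx
    set w : Fin ν → ℂ := z ∘ Sum.inr with hw
    rw [Matrix.fromBlocks_mulVec] at hAz
    have hzsplit : z = Sum.elim x w := by funext i; cases i <;> rfl
    rw [hzsplit, Matrix.fromCols_mulVec_sumElim] at hCz
    have eq1 : A' *ᵥ x + (B' * Mc') *ᵥ w = l • x := by
      funext i
      have := congrFun hAz (Sum.inl i)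
      exact this
    have eq2 : (Ga' * C') *ᵥ x + (S' - Ga' * (Mdes' - D' * Mc')) *ᵥ w = l • w := by
      funext i
      have := congrFun hAz (Sum.inr i)
      exact this
    have eq3 : C' *ᵥ x = (Mdes' - D' * Mc') *ᵥ w := by
      rw [Matrix.neg_mulVec, ← sub_eq_add_neg] at hCz
      exact sub_eq_zero.mp hCz
    have hSw : S' *ᵥ w = l • w := by
      rw [← Matrix.mulVec_mulVec x Ga' C', eq3, Matrix.sub_mulVec S' (Ga' * (Mdes' - D' * Mc')) w,
        ← Matrix.mulVec_mulVec w Ga' (Mdes' - D' * Mc')] at eq2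
      rw [← eq2]; abel
    have hCP : C' * Pihat' = Mdes' - D' * Mc' - Mop' := by
      rw [eq_sub_of_add_eq hRel]; abel
    set xt : Fin n → ℂ := x - Pihat' *ᵥ w with hxt
    have hBMc : B' * Mc' = Pihat' * S' - A' * Pihat' := eq_sub_of_add_eq' hSyl.symm
    have hBw : (B' * Mc') *ᵥ w = l • (Pihat' *ᵥ w) - A' *ᵥ (Pihat' *ᵥ w) := by
      rw [hBMc, Matrix.sub_mulVec, ← Matrix.mulVec_mulVec w Pihat' S', hSw,
        Matrix.mulVec_smul, ← Matrix.mulVec_mulVec w A' Pihat']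
    have hAxt : A' *ᵥ xt = l • xt := by
      rw [hxt, Matrix.mulVec_sub, smul_sub]
      rw [hBw] at eq1
      rw [sub_eq_sub_iff_add_eq_add, ← eq1]
      abel
    have hCxt : C' *ᵥ xt = Mop' *ᵥ w := by
      rw [hxt, Matrix.mulVec_sub, eq3, Matrix.mulVec_mulVec, hCP]
      simp only [Matrix.sub_mulVec]
      abel
    by_cases hwz : w = 0
    · have hxtx : xt = x := by rw [hxt, hwz, Matrix.mulVec_zero, sub_zero]
      have hx0 : x = 0 := by
        apply hCA l hl x
        · rw [← hxtx]; exact hAxt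
        · rw [← hxtx, hCxt, hwz, Matrix.mulVec_zero]
      rw [hzsplit, hx0, hwz]
      funext i; cases i <;> rfl
    · exfalso
      have hlS : l ∈ spectrum ℂ S' := mem_spectrum_of_eigen hwz hSw
      by_cases hxtz : xt = 0
      · apply hwz
        apply hMS l hl w hSw
        rw [← hCxt, hxtz, Matrix.mulVec_zero]
      · exact hdisj l ⟨mem_spectrum_of_eigen hxtz hAxt, hlS⟩
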